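/- Let P ⊆ ℚ^n (or ℝ^n) be an n-dimensional simplex containing the origin in its interior. If the barycenter of P is the origin, then the barycenter of the dual polytope P^∨ = {y : ⟨x, y⟩ ≥ -1 for all x ∈ P} is also the origin. -/

import Mathlib

open MeasureTheory

/-- Dot product on `Fin n → ℝ`. -/
def dot {n : ℕ} (x y : Fin n → ℝ) : ℝ := ∑ i, x i * y i

/-- The dual polytope (polar with the convention `⟨x,y⟩ ≥ -1`). -/
def dualPoly {n : ℕ} (P : Set (Fin n → ℝ)) : Set (Fin n → ℝ) :=
  {y | ∀ x ∈ P, dot x y ≥ -1}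

/-- The barycenter (centroid) of a set in `ℝⁿ`. -/
noncomputable def bary {n : ℕ} (P : Set (Fin n → ℝ)) : Fin n → ℝ :=
  (volume P).toReal⁻¹ • ∫ x in P, x

lemma bary_affine_image {n : ℕ} (L : (Fin n → ℝ) →ₗ[ℝ] (Fin n → ℝ))
    (hdet : LinearMap.det L ≠ 0) (c : Fin n → ℝ) {S : Set (Fin n → ℝ)}
    (hS : IsCompact S) (hvol : volume S ≠ 0) :
    bary ((fun x => L x + c) '' S) = L (bary S) + c := by
  have hSm : MeasurableSet S := hS.measurableSet
  set Lc : (Fin n → ℝ) →L[ℝ] (Fin n → ℝ) := L.toContinuousLinearMap with hLcdef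
  have hLc : ⇑Lc = ⇑L := rfl
  have hderiv : ∀ x ∈ S, HasFDerivWithinAt (fun x => L x + c) Lc S x := fun x _ =>
    ((Lc.hasFDerivAt).add_const c).hasFDerivWithinAt
  have hLinj : Function.Injective L := by
    have he : ((LinearMap.equivOfDetNeZero L hdet) : (Fin n → ℝ) →ₗ[ℝ] (Fin n → ℝ)) = L :=
      LinearEquiv.coe_ofIsUnitDet _
    rw [← he]
    exact (LinearMap.equivOfDetNeZero L hdet).injective
  have hinj : Set.InjOn (fun x => L x + c) S := fun x _ y _ h => by
    apply hLinj; simpa using add_right_cancel h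
  have hdet' : Lc.det = LinearMap.det L := by
    simp [ContinuousLinearMap.det, hLcdef]
  have key := integral_image_eq_integral_abs_det_fderiv_smul volume hSm hderiv hinj
      (fun y => y)
  have key1 := integral_image_eq_integral_abs_det_fderiv_smul volume hSm hderiv hinj
      (fun _ => (1:ℝ))
  set D : ℝ := |LinearMap.det L| with hD
  have hD0 : D ≠ 0 := abs_ne_zero.mpr hdet
  set v : ℝ := (volume S).toReal with hv
  have hv0 : v ≠ 0 := by
    rw [hv]
    exact ENNReal.toReal_ne_zero.2 ⟨hvol, hS.measure_lt_top.ne⟩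
  set T : Set (Fin n → ℝ) := (fun x => L x + c) '' S with hT
  set I : Fin n → ℝ := ∫ x in S, x with hI
  have hid : IntegrableOn (fun x => x) S volume :=
    continuous_id.continuousOn.integrableOn_compact hS
  have hLint : IntegrableOn (fun x => L x) S volume :=
    Lc.continuous.continuousOn.integrableOn_compact hS
  have hcint : IntegrableOn (fun _ => c) S volume :=
    integrableOn_const hS.measure_lt_top.ne
  have hint : (∫ x in S, (L x + c)) = L I + v • c := by
    rw [integral_add hLint hcint, setIntegral_const]
    congr 1
    rw [← hLc]
    exact (Lc.integral_comp_comm hid)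
  have hvolT : (volume T).toReal = D * v := by
    have h1 : (∫ _ in T, (1:ℝ)) = (volume T).toReal := by
      rw [setIntegral_const]; simp; rfl
    have h2 : (∫ x in S, |Lc.det| • (1:ℝ)) = D * v := by
      rw [integral_smul, setIntegral_const, hdet']
      simp [hD, hv, mul_comm]
      exact mul_comm _ _
    rw [← h1, key1, h2]
  have hintT : (∫ y in T, y) = D • (L I + v • c) := by
    rw [key]
    rw [integral_smul, hdet', hint]
  show (volume T).toReal⁻¹ • (∫ y in T, y) = L (bary S) + c
  rw [hvolT, hintT, smul_smul]
  have : (D * v)⁻¹ * D = v⁻¹ := by field_simp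
  rw [this, smul_add, ← map_smul L, smul_smul, inv_mul_cancel₀ hv0, one_smul]
  rfl

lemma bary_simplex {n : ℕ} (B : AffineBasis (Fin (n+1)) ℝ (Fin n → ℝ))
    (hne : (interior (convexHull ℝ (Set.range ⇑B))).Nonempty) :
    bary (convexHull ℝ (Set.range ⇑B)) = ((n:ℝ)+1)⁻¹ • ∑ i, B i := by
  classical
  set S := convexHull ℝ (Set.range ⇑B) with hSdef
  have hS : IsCompact S := (Set.finite_range ⇑B).isCompact_convexHull (𝕜 := ℝ)
  have hvol : volume S ≠ 0 := (Measure.measure_pos_of_nonempty_interior _ hne).ne'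
  set m := bary S with hm
  -- the affine symmetry for each permutation
  have key : ∀ σ : Equiv.Perm (Fin (n+1)), ∀ j, B.coord j m = B.coord (σ.symm j) m := by
    intro σ j
    set F : (Fin n → ℝ) →ᵃ[ℝ] (Fin n → ℝ) :=
      (Finset.univ.affineCombination ℝ (⇑B ∘ ⇑σ)).comp B.coords with hF
    have hFval : ∀ x, F x = ∑ i, B.coord i x • B (σ i) := by
      intro x
      have hw : ∑ i, B.coords x i = 1 := B.sum_coord_apply_eq_one x
      rw [hF, AffineMap.comp_apply,
        Finset.univ.affineCombination_eq_linear_combination _ _ hw]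
      simp [AffineBasis.coords_apply]
    have hcoordF : ∀ x j, B.coord j (F x) = B.coord (σ.symm j) x := by
      intro x j
      have hre : F x = ∑ i, B.coord (σ.symm i) x • B i := by
        rw [hFval x, ← Equiv.sum_comp σ (fun i => B.coord (σ.symm i) x • B i)]
        simp
      have hw' : ∑ i, B.coord (σ.symm i) x = 1 := by
        rw [Equiv.sum_comp σ.symm (fun i => B.coord i x)]
        exact B.sum_coord_apply_eq_one x
      have : F x = Finset.univ.affineCombination ℝ ⇑B (fun i => B.coord (σ.symm i) x) := by
        rw [Finset.univ.affineCombination_eq_linear_combination _ _ hw', hre]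
      rw [this, B.coord_apply_combination_of_mem (Finset.mem_univ j) hw']
    have hFB : ∀ j, F (B j) = B (σ j) := by
      intro j
      rw [hFval]
      simp [B.coord_apply, ite_smul]
    have hFinj : Function.Injective ⇑F := by
      intro x y hxy
      apply B.ext_elem
      intro i
      have := hcoordF x (σ i)
      rw [hxy, hcoordF y (σ i)] at this
      simpa using this.symm
    have hLinj : Function.Injective ⇑F.linear := by
      have hdec := F.decomp
      intro u w huw
      have : F u = F w := by
        rw [hdec]; simp only [Pi.add_apply]; rw [huw]
      exact hFinj this
    have hdet : LinearMap.det F.linear ≠ 0 := by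
      intro h0
      have := LinearMap.bot_lt_ker_of_det_eq_zero h0
      rw [LinearMap.ker_eq_bot.2 hLinj] at this
      exact lt_irrefl _ this
    have him : (fun x => F.linear x + F 0) '' S = S := by
      have hfun : (fun x => F.linear x + F 0) = ⇑F := by
        funext x
        have := F.decomp
        rw [this]; simp
      rw [hfun, hSdef, AffineMap.image_convexHull]
      congr 1
      rw [← Set.range_comp]
      have : ⇑F ∘ ⇑B = ⇑B ∘ ⇑σ := funext fun j => hFB j
      rw [this]
      exact σ.surjective.range_comp ⇑B
    have hbar : F m = m := by
      have h2 := bary_affine_image F.linear hdet (F 0) hS hvol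
      rw [him] at h2
      calc F m = F.linear m + F 0 := by rw [F.decomp]; simp
        _ = m := h2.symm
    calc B.coord j m = B.coord j (F m) := by rw [hbar]
      _ = B.coord (σ.symm j) m := hcoordF m j
  -- all coordinates of m are equal
  have hconst : ∀ i j : Fin (n+1), B.coord i m = B.coord j m := by
    intro i j
    have := key (Equiv.swap i j) i
    rwa [Equiv.symm_swap, Equiv.swap_apply_left] at this
  have hval : ∀ i, B.coord i m = ((n:ℝ)+1)⁻¹ := by
    intro i
    have hsum1 : ∑ j, B.coord j m = 1 := B.sum_coord_apply_eq_one m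
    have : ∑ _j : Fin (n+1), B.coord i m = 1 := by
      rw [← hsum1]
      exact Finset.sum_congr rfl fun j _ => hconst i j
    rw [Finset.sum_const, Finset.card_univ, Fintype.card_fin] at this
    have hn1 : ((n:ℝ)+1) ≠ 0 := by positivity
    field_simp
    rw [mul_comm]
    simpa [nsmul_eq_mul] using this
  have := B.linear_combination_coord_eq_self m
  rw [← this]
  rw [Finset.smul_sum]
  exact Finset.sum_congr rfl fun i _ => by rw [hval i]

lemma dot_sum_left {n : ℕ} {ι : Type*} (s : Finset ι) (f : ι → (Fin n → ℝ)) (y : Fin n → ℝ) :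
    dot (∑ i ∈ s, f i) y = ∑ i ∈ s, dot (f i) y := by
  simp only [dot, Finset.sum_apply, Finset.sum_mul]
  exact Finset.sum_comm

lemma dot_sum_right {n : ℕ} {ι : Type*} (s : Finset ι) (x : Fin n → ℝ) (f : ι → (Fin n → ℝ)) :
    dot x (∑ i ∈ s, f i) = ∑ i ∈ s, dot x (f i) := by
  simp only [dot, Finset.sum_apply, Finset.mul_sum]
  exact Finset.sum_comm

lemma dot_smul_left {n : ℕ} (r : ℝ) (x y : Fin n → ℝ) : dot (r • x) y = r * dot x y := by
  simp [dot, Finset.mul_sum, mul_assoc]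

lemma dot_smul_right {n : ℕ} (r : ℝ) (x y : Fin n → ℝ) : dot x (r • y) = r * dot x y := by
  simp [dot, Finset.mul_sum, mul_left_comm]

lemma dot_add_right {n : ℕ} (x y z : Fin n → ℝ) : dot x (y + z) = dot x y + dot x z := by
  simp [dot, mul_add, Finset.sum_add_distrib]

lemma dot_sub_right {n : ℕ} (x y z : Fin n → ℝ) : dot x (y - z) = dot x y - dot x z := by
  simp [dot, mul_sub, Finset.sum_sub_distrib]

lemma dot_add_left {n : ℕ} (x y z : Fin n → ℝ) : dot (x + y) z = dot x z + dot y z := by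
  simp [dot, add_mul, Finset.sum_add_distrib]

lemma dot_zero_left {n : ℕ} (y : Fin n → ℝ) : dot 0 y = 0 := by simp [dot]

lemma dot_zero_right {n : ℕ} (y : Fin n → ℝ) : dot y 0 = 0 := by simp [dot]

lemma eq_zero_of_dot_self {n : ℕ} (z : Fin n → ℝ) (h : dot z z = 0) : z = 0 :=
  dotProduct_self_eq_zero.1 h

theorem stmt0 {n : ℕ} (a : Fin (n + 1) → (Fin n → ℝ))
    (ha : AffineIndependent ℝ a)
    (P : Set (Fin n → ℝ)) (hP : P = convexHull ℝ (Set.range a))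
    (h0 : (0 : Fin n → ℝ) ∈ interior P)
    (hbary : bary P = 0) :
    bary (dualPoly P) = 0 := by
  classical
  have hn1 : ((n:ℝ)+1) ≠ 0 := by positivity
  have htop : affineSpan ℝ (Set.range a) = ⊤ := by
    rw [ha.affineSpan_eq_top_iff_card_eq_finrank_add_one]
    simp [Module.finrank_pi]
  set B : AffineBasis (Fin (n+1)) ℝ (Fin n → ℝ) := ⟨a, ha, htop⟩ with hBdef
  have hBa : ⇑B = a := rfl
  have hPB : P = convexHull ℝ (Set.range ⇑B) := by rw [hP, hBa]
  have hbS : bary P = ((n:ℝ)+1)⁻¹ • ∑ i, B i := by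
    rw [hPB]; exact bary_simplex B ⟨0, by rw [← hPB]; exact h0⟩
  have hsum : ∑ i, a i = 0 := by
    have h := hbS.symm.trans hbary
    rcases smul_eq_zero.1 h with h' | h'
    · exact absurd h' (inv_ne_zero hn1)
    · exact h'
  -- the barycentric coordinates of the origin
  have hw1 : ∑ _i : Fin (n+1), ((n:ℝ)+1)⁻¹ = 1 := by
    rw [Finset.sum_const, Finset.card_univ, Fintype.card_fin, nsmul_eq_mul]
    push_cast
    field_simp
  have hcomb0 : Finset.univ.affineCombination ℝ a (fun _ => ((n:ℝ)+1)⁻¹) = 0 := by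
    rw [Finset.univ.affineCombination_eq_linear_combination _ _ hw1, ← Finset.smul_sum, hsum,
      smul_zero]
  have hcoord0 : ∀ i, B.coord i 0 = ((n:ℝ)+1)⁻¹ := by
    intro i
    rw [← hcomb0]
    exact B.coord_apply_combination_of_mem (Finset.mem_univ i) hw1
  -- the vertices of the dual simplex
  set u : Fin (n+1) → (Fin n → ℝ) :=
    fun i => fun j => (B.coord i).linear (Pi.single j 1) with hu
  set b : Fin (n+1) → (Fin n → ℝ) := fun i => ((n:ℝ)+1) • u i with hb
  have hulin : ∀ i (y : Fin n → ℝ), (B.coord i).linear y = dot y (u i) := by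
    intro i y
    rw [LinearMap.pi_apply_eq_sum_univ ((B.coord i).linear) y]
    rw [hu]
    simp only [dot, smul_eq_mul]
    refine Finset.sum_congr rfl fun j _ => ?_
    congr 1
    congr 1
    funext k
    simp [Pi.single_apply, eq_comm]
  have hdot : ∀ k i, dot (a k) (b i) = (if i = k then ((n:ℝ)+1) else 0) - 1 := by
    intro k i
    have hlin : (B.coord i).linear (a k) = B.coord i (a k) - B.coord i 0 := by
      have hd := (B.coord i).decomp
      have : B.coord i (a k) = (B.coord i).linear (a k) + B.coord i 0 := by
        rw [hd]; simp
      linarith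
    rw [hb]
    simp only
    rw [dot_smul_right, ← hulin, hlin, hcoord0]
    have : B.coord i (a k) = if i = k then 1 else 0 := B.coord_apply i k
    rw [this]
    rcases eq_or_ne i k with h | h
    · simp only [h, if_pos rfl]
      field_simp
      simp
    · simp only [if_neg h]
      field_simp
      simp
  -- membership in the dual only needs checking on vertices
  have hmem : ∀ y, y ∈ dualPoly P ↔ ∀ k, dot (a k) y ≥ -1 := by
    intro y
    constructor
    · intro hy k
      exact hy (a k) (by rw [hP]; exact subset_convexHull ℝ _ ⟨k, rfl⟩)
    · intro h x hx
      rw [hP] at hx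
      have hconv : Convex ℝ {x : Fin n → ℝ | dot x y ≥ -1} := by
        intro p hp q hq s t hs ht hst
        simp only [Set.mem_setOf_eq, ge_iff_le] at hp hq ⊢
        rw [dot_add_left, dot_smul_left, dot_smul_left]
        nlinarith [mul_le_mul_of_nonneg_left hp hs, mul_le_mul_of_nonneg_left hq ht]
      exact convexHull_min (by rintro _ ⟨k, rfl⟩; exact h k) hconv hx
  -- every vector vanishing against all vertices is zero
  have hzero : ∀ z : Fin n → ℝ, (∀ k, dot (a k) z = 0) → z = 0 := by
    intro z hz
    apply eq_zero_of_dot_self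
    have hrep : z = ∑ i, B.coord i z • a i := (B.linear_combination_coord_eq_self z).symm
    calc dot z z = dot (∑ i, B.coord i z • a i) z := by rw [← hrep]
      _ = ∑ i, B.coord i z * dot (a i) z := by
          rw [dot_sum_left]
          exact Finset.sum_congr rfl fun i _ => dot_smul_left _ _ _
      _ = 0 := by simp [hz]
  have hsuma : ∀ y : Fin n → ℝ, ∑ k, dot (a k) y = 0 := by
    intro y
    rw [← dot_sum_left, hsum, dot_zero_left]
  -- dual polytope is the simplex on b
  have hdualeq : dualPoly P = convexHull ℝ (Set.range b) := by
    apply Set.Subset.antisymm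
    · intro y hy
      have h := (hmem y).1 hy
      set t : Fin (n+1) → ℝ := fun k => ((n:ℝ)+1)⁻¹ * (dot (a k) y + 1) with ht
      have ht0 : ∀ k, 0 ≤ t k := by
        intro k
        have := h k
        have h1 : (0:ℝ) ≤ dot (a k) y + 1 := by linarith
        positivity
      have htsum : ∑ k, t k = 1 := by
        rw [ht]
        simp only
        rw [← Finset.mul_sum, Finset.sum_add_distrib, hsuma y]
        simp [Finset.card_univ]
        push_cast
        field_simp
      have hdz : ∀ j, dot (a j) (∑ k, t k • b k) = dot (a j) y := by
        intro j
        rw [dot_sum_right]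
        have : ∀ k, dot (a j) (t k • b k) = t k * ((if k = j then ((n:ℝ)+1) else 0) - 1) := by
          intro k
          rw [dot_smul_right, hdot]
        simp only [this]
        have hsplit : ∀ k, t k * ((if k = j then ((n:ℝ)+1) else 0) - 1)
            = (if k = j then t k * ((n:ℝ)+1) else 0) - t k := by
          intro k
          rcases eq_or_ne k j with h | h <;> simp [h] <;> ring
        simp only [hsplit]
        rw [Finset.sum_sub_distrib, Finset.sum_ite_eq' Finset.univ j
          (fun k => t k * ((n:ℝ)+1)), htsum]
        simp only [Finset.mem_univ, if_pos]
        have hj : t j * ((n:ℝ)+1) = dot (a j) y + 1 := by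
          rw [ht]
          field_simp
        linarith [hj]
      have hyz : y = ∑ k, t k • b k := by
        have hjz : ∀ j, dot (a j) (y - ∑ k, t k • b k) = 0 := by
          intro j
          rw [dot_sub_right, hdz]
          ring
        exact sub_eq_zero.1 (hzero _ hjz)
      rw [hyz]
      have hcm := Finset.centerMass_mem_convexHull (Finset.univ) (fun k _ => ht0 k)
        (by rw [htsum]; norm_num) (fun k _ => Set.mem_range_self (f := b) k)
      rwa [Finset.centerMass_eq_of_sum_1 _ _ htsum] at hcm
    · apply convexHull_min
      · rintro _ ⟨k, rfl⟩
        rw [hmem]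
        intro j
        rw [hdot]
        rcases eq_or_ne k j with h | h <;> simp [h] <;> ring <;> linarith [Nat.cast_nonneg (α := ℝ) n]
      · intro y hy z hz s t hs ht hst
        intro x hx
        have h1 := hy x hx
        have h2 := hz x hx
        rw [dot_add_right, dot_smul_right, dot_smul_right]
        nlinarith [mul_le_mul_of_nonneg_left h1 hs, mul_le_mul_of_nonneg_left h2 ht]
  -- b is affinely independent and spans
  have hbind : AffineIndependent ℝ b := by
    rw [affineIndependent_iff]
    intro s w hw hws e he
    have hds := congrArg (dot (a e)) hws
    rw [dot_sum_right, dot_zero_right] at hds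
    simp only [dot_smul_right, hdot] at hds
    have hsplit : ∀ k, w k * ((if k = e then ((n:ℝ)+1) else 0) - 1)
        = (if k = e then w k * ((n:ℝ)+1) else 0) - w k := by
      intro k
      rcases eq_or_ne k e with h | h <;> simp [h] <;> ring
    simp only [hsplit] at hds
    rw [Finset.sum_sub_distrib, hw, Finset.sum_ite_eq' s e (fun k => w k * ((n:ℝ)+1))] at hds
    simp only [he, if_pos, sub_zero] at hds
    rcases mul_eq_zero.1 hds with h | h
    · exact h
    · exact absurd h hn1
  have hbtop : affineSpan ℝ (Set.range b) = ⊤ := by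
    rw [hbind.affineSpan_eq_top_iff_card_eq_finrank_add_one]
    simp [Module.finrank_pi]
  set Bb : AffineBasis (Fin (n+1)) ℝ (Fin n → ℝ) := ⟨b, hbind, hbtop⟩ with hBb
  have hsumb : ∑ i, b i = 0 := by
    apply hzero
    intro k
    rw [dot_sum_right]
    simp only [hdot]
    rw [Finset.sum_sub_distrib, Finset.sum_ite_eq' Finset.univ k (fun _ => ((n:ℝ)+1))]
    simp
  have h0dual : (0 : Fin n → ℝ) ∈ interior (dualPoly P) := by
    rw [mem_interior]
    refine ⟨⋂ k, {y : Fin n → ℝ | dot (a k) y > -1}, ?_, ?_, ?_⟩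
    · intro y hy
      rw [hmem]
      intro k
      exact le_of_lt (Set.mem_iInter.1 hy k)
    · apply isOpen_iInter_of_finite
      intro k
      have hc : Continuous fun y : Fin n → ℝ => dot (a k) y := by
        unfold dot
        exact continuous_finset_sum _ fun j _ => (continuous_const.mul (continuous_apply j))
      exact isOpen_lt continuous_const hc
    · rw [Set.mem_iInter]
      intro k
      simp only [Set.mem_setOf_eq, dot_zero_right]
      norm_num
  have hne : (interior (convexHull ℝ (Set.range ⇑Bb))).Nonempty := by
    refine ⟨0, ?_⟩
    have heq : convexHull ℝ (Set.range ⇑Bb) = dualPoly P := by rw [hdualeq]; rfl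
    rw [heq]
    exact h0dual
  rw [hdualeq]
  have heq2 : convexHull ℝ (Set.range b) = convexHull ℝ (Set.range ⇑Bb) := rfl
  rw [heq2, bary_simplex Bb hne]
  have hfin : ∑ i, Bb i = 0 := hsumb
  rw [hfin, smul_zero]
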